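/- As an identity of formal power series in q, 512q⁵P(q³)⁸X(−q³)⁵Φ(−q⁹)³ − 1216q⁵P(q³)⁷X(−q³)⁴Φ(−q⁹)⁴Ψ(q⁹) + 1280q⁵P(q³)⁶X(−q³)³Φ(−q⁹)⁵Ψ(q⁹)² − 640q⁵P(q³)⁵X(−q³)²Φ(−q⁹)⁶Ψ(q⁹)³ + 152q⁵P(q³)⁴X(−q³)Φ(−q⁹)⁷Ψ(q⁹)⁴ − 16q⁵P(q³)³Φ(−q⁹)⁸Ψ(q⁹)⁵ = 8·3²·q⁵·(q⁶;q⁶)_∞³ (q⁹;q⁹)_∞¹⁷ / ((q³;q³)_∞³ (q¹⁸;q¹⁸)_∞). -/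

import Mathlib

open PowerSeries

/-- The infinite product `(q^j; q^k)_∞ = ∏_{n ≥ 0} (1 - q^(j + k*n))` as a formal power
series over `ℤ`: for `j ≥ 1` its `n`-th coefficient is the (stable) `n`-th coefficient
of the partial products `∏_{m < n+1} (1 - q^(j + k*m))`. -/
noncomputable def qp (j k : ℕ) : PowerSeries ℤ :=
  PowerSeries.mk fun n =>
    PowerSeries.coeff n
      (∏ m ∈ Finset.range (n + 1), (1 - (PowerSeries.X : PowerSeries ℤ) ^ (j + k * m)))

/-- Substitution of `q^k` for `q` in a formal power series (for `k ≥ 1`). -/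
noncomputable def substQ (k : ℕ) (f : PowerSeries ℤ) : PowerSeries ℤ :=
  PowerSeries.mk fun n => if k ∣ n then PowerSeries.coeff (n / k) f else 0

open Finset

lemma coeff_mul_one_sub_X_pow (f : PowerSeries ℤ) {n e : ℕ} (h : n < e) :
    (PowerSeries.coeff n) (f * (1 - X ^ e)) = coeff n f := by
  rw [mul_sub, mul_one, map_sub, PowerSeries.coeff_mul_X_pow' f e n, if_neg (by omega)]
  ring

lemma qp_spec (j k n M : ℕ) (hj : 1 ≤ j) (hk : 1 ≤ k) (hM : n < M) :
    coeff n (qp j k) = coeff n (∏ m ∈ Finset.range M, (1 - (X : PowerSeries ℤ) ^ (j + k * m))) := by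
  rw [qp, coeff_mk]
  induction M, (show n + 1 ≤ M from hM) using Nat.le_induction with
  | base => rfl
  | succ M hM ih =>
      have hMk : M ≤ k * M := Nat.le_mul_of_pos_left M hk
      conv_rhs => rw [Finset.prod_range_succ]
      rw [coeff_mul_one_sub_X_pow _ (show n < j + k * M by omega)]
      exact ih (by omega)

lemma coeff_mul_congr {f f' g g' : PowerSeries ℤ} {n : ℕ}
    (hf : ∀ i ≤ n, coeff i f = coeff i f')
    (hg : ∀ i ≤ n, coeff i g = coeff i g') :
    coeff n (f * g) = coeff n (f' * g') := by
  rw [PowerSeries.coeff_mul, PowerSeries.coeff_mul]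
  refine Finset.sum_congr rfl fun p hp => ?_
  rw [hf p.1 (Finset.HasAntidiagonal.antidiagonal.fst_le hp), hg p.2 (Finset.HasAntidiagonal.antidiagonal.snd_le hp)]

lemma prod_range_two_mul (f : ℕ → PowerSeries ℤ) (M : ℕ) :
    ∏ m ∈ range (2 * M), f m = (∏ m ∈ range M, f (2 * m)) * ∏ m ∈ range M, f (2 * m + 1) := by
  induction M with
  | zero => simp
  | succ M ih =>
      rw [show 2 * (M + 1) = 2 * M + 1 + 1 by ring, prod_range_succ, prod_range_succ,
        prod_range_succ, prod_range_succ, ih]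
      ring

lemma prod_range_three_mul (f : ℕ → PowerSeries ℤ) (M : ℕ) :
    ∏ m ∈ range (3 * M), f m =
      ((∏ m ∈ range M, f (3 * m)) * ∏ m ∈ range M, f (3 * m + 1)) * ∏ m ∈ range M, f (3 * m + 2) := by
  induction M with
  | zero => simp
  | succ M ih =>
      rw [show 3 * (M + 1) = 3 * M + 1 + 1 + 1 by ring, prod_range_succ, prod_range_succ,
        prod_range_succ, prod_range_succ, prod_range_succ, prod_range_succ, ih]
      ring

lemma qp_split2 (j k : ℕ) (hj : 1 ≤ j) (hk : 1 ≤ k) :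
    qp j k = qp j (2 * k) * qp (j + k) (2 * k) := by
  ext n
  have h1 : coeff n (qp j (2 * k) * qp (j + k) (2 * k)) =
      coeff n ((∏ m ∈ range (n + 1), (1 - (X : PowerSeries ℤ) ^ (j + 2 * k * m))) *
        ∏ m ∈ range (n + 1), (1 - (X : PowerSeries ℤ) ^ (j + k + 2 * k * m))) :=
    coeff_mul_congr (fun i hi => qp_spec j (2 * k) i (n + 1) hj (by omega) (by omega))
      (fun i hi => qp_spec (j + k) (2 * k) i (n + 1) (by omega) (by omega) (by omega))
  have e1 : ∏ m ∈ range (n + 1), (1 - (X : PowerSeries ℤ) ^ (j + k * (2 * m))) =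
      ∏ m ∈ range (n + 1), (1 - (X : PowerSeries ℤ) ^ (j + 2 * k * m)) :=
    Finset.prod_congr rfl fun m _ => by rw [show j + k * (2 * m) = j + 2 * k * m by ring]
  have e2 : ∏ m ∈ range (n + 1), (1 - (X : PowerSeries ℤ) ^ (j + k * (2 * m + 1))) =
      ∏ m ∈ range (n + 1), (1 - (X : PowerSeries ℤ) ^ (j + k + 2 * k * m)) :=
    Finset.prod_congr rfl fun m _ => by rw [show j + k * (2 * m + 1) = j + k + 2 * k * m by ring]
  rw [h1, qp_spec j k n (2 * (n + 1)) hj hk (by omega), prod_range_two_mul, e1, e2]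

lemma qp_split3 (j k : ℕ) (hj : 1 ≤ j) (hk : 1 ≤ k) :
    qp j k = qp j (3 * k) * qp (j + k) (3 * k) * qp (j + 2 * k) (3 * k) := by
  ext n
  have h0 : ∀ i ≤ n, coeff i (qp j (3 * k) * qp (j + k) (3 * k)) =
      coeff i ((∏ m ∈ range (n + 1), (1 - (X : PowerSeries ℤ) ^ (j + 3 * k * m))) *
        ∏ m ∈ range (n + 1), (1 - (X : PowerSeries ℤ) ^ (j + k + 3 * k * m))) :=
    fun i hi => coeff_mul_congr
      (fun i' hi' => qp_spec j (3 * k) i' (n + 1) hj (by omega) (by omega))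
      (fun i' hi' => qp_spec (j + k) (3 * k) i' (n + 1) (by omega) (by omega) (by omega))
  have h1 : coeff n (qp j (3 * k) * qp (j + k) (3 * k) * qp (j + 2 * k) (3 * k)) =
      coeff n (((∏ m ∈ range (n + 1), (1 - (X : PowerSeries ℤ) ^ (j + 3 * k * m))) *
        ∏ m ∈ range (n + 1), (1 - (X : PowerSeries ℤ) ^ (j + k + 3 * k * m))) *
        ∏ m ∈ range (n + 1), (1 - (X : PowerSeries ℤ) ^ (j + 2 * k + 3 * k * m))) :=
    coeff_mul_congr h0
      (fun i hi => qp_spec (j + 2 * k) (3 * k) i (n + 1) (by omega) (by omega) (by omega))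
  have e1 : ∏ m ∈ range (n + 1), (1 - (X : PowerSeries ℤ) ^ (j + k * (3 * m))) =
      ∏ m ∈ range (n + 1), (1 - (X : PowerSeries ℤ) ^ (j + 3 * k * m)) :=
    Finset.prod_congr rfl fun m _ => by rw [show j + k * (3 * m) = j + 3 * k * m by ring]
  have e2 : ∏ m ∈ range (n + 1), (1 - (X : PowerSeries ℤ) ^ (j + k * (3 * m + 1))) =
      ∏ m ∈ range (n + 1), (1 - (X : PowerSeries ℤ) ^ (j + k + 3 * k * m)) :=
    Finset.prod_congr rfl fun m _ => by rw [show j + k * (3 * m + 1) = j + k + 3 * k * m by ring]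
  have e3 : ∏ m ∈ range (n + 1), (1 - (X : PowerSeries ℤ) ^ (j + k * (3 * m + 2))) =
      ∏ m ∈ range (n + 1), (1 - (X : PowerSeries ℤ) ^ (j + 2 * k + 3 * k * m)) :=
    Finset.prod_congr rfl fun m _ => by rw [show j + k * (3 * m + 2) = j + 2 * k + 3 * k * m by ring]
  rw [h1, qp_spec j k n (3 * (n + 1)) hj hk (by omega), prod_range_three_mul, e1, e2, e3]

lemma coeff_substQ (k : ℕ) (f : PowerSeries ℤ) (n : ℕ) :
    coeff n (substQ k f) = if k ∣ n then coeff (n / k) f else 0 := by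
  rw [substQ, coeff_mk]

lemma substQ_one (k : ℕ) (hk : k ≠ 0) : substQ k (1 : PowerSeries ℤ) = 1 := by
  ext n
  rw [coeff_substQ]
  by_cases h : k ∣ n
  · rcases h with ⟨c, rfl⟩
    rw [if_pos ⟨c, rfl⟩, Nat.mul_div_cancel_left c (Nat.pos_of_ne_zero hk),
      PowerSeries.coeff_one, PowerSeries.coeff_one]
    by_cases hc : c = 0
    · simp [hc]
    · rw [if_neg hc, if_neg (Nat.mul_ne_zero hk hc)]
  · rw [if_neg h, PowerSeries.coeff_one, if_neg (by rintro rfl; exact h (dvd_zero k))]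

lemma substQ_add (k : ℕ) (f g : PowerSeries ℤ) :
    substQ k (f + g) = substQ k f + substQ k g := by
  ext n
  rw [map_add, coeff_substQ, coeff_substQ, coeff_substQ, map_add]
  split <;> simp

lemma substQ_mul (k : ℕ) (hk : k ≠ 0) (f g : PowerSeries ℤ) :
    substQ k (f * g) = substQ k f * substQ k g := by
  have hkp : 0 < k := Nat.pos_of_ne_zero hk
  ext n
  rw [coeff_substQ]
  conv_rhs => rw [PowerSeries.coeff_mul]
  have hsummand : ∀ p ∈ Finset.HasAntidiagonal.antidiagonal n,
      coeff p.1 (substQ k f) * coeff p.2 (substQ k g) =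
      if k ∣ p.1 ∧ k ∣ p.2 then coeff (p.1 / k) f * coeff (p.2 / k) g else 0 := by
    intro p _
    rw [coeff_substQ, coeff_substQ]
    by_cases h1 : k ∣ p.1 <;> by_cases h2 : k ∣ p.2 <;> simp [h1, h2]
  rw [Finset.sum_congr rfl hsummand, ← Finset.sum_filter]
  by_cases h : k ∣ n
  · rw [if_pos h, PowerSeries.coeff_mul]
    refine (Finset.sum_nbij' (i := fun p => (p.1 / k, p.2 / k))
      (j := fun q => (k * q.1, k * q.2)) ?_ ?_ ?_ ?_ ?_).symm
    · intro p hp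
      simp only [Finset.mem_filter, Finset.HasAntidiagonal.mem_antidiagonal] at hp
      obtain ⟨hpn, ⟨c, hc⟩, ⟨d, hd⟩⟩ := hp
      simp only [Finset.HasAntidiagonal.mem_antidiagonal]
      rw [hc, hd, Nat.mul_div_cancel_left c hkp, Nat.mul_div_cancel_left d hkp, ← hpn, hc, hd,
        ← Nat.mul_add, Nat.mul_div_cancel_left _ hkp]
    · intro q hq
      simp only [Finset.HasAntidiagonal.mem_antidiagonal] at hq
      simp only [Finset.mem_filter, Finset.HasAntidiagonal.mem_antidiagonal]
      exact ⟨by rw [← Nat.mul_add, hq, Nat.mul_div_cancel' h], ⟨q.1, rfl⟩, ⟨q.2, rfl⟩⟩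
    · intro p hp
      simp only [Finset.mem_filter, Finset.HasAntidiagonal.mem_antidiagonal] at hp
      obtain ⟨-, h1, h2⟩ := hp
      exact Prod.ext (Nat.mul_div_cancel' h1) (Nat.mul_div_cancel' h2)
    · intro q hq
      exact Prod.ext (Nat.mul_div_cancel_left _ hkp) (Nat.mul_div_cancel_left _ hkp)
    · intro p hp
      rfl
  · rw [if_neg h]
    refine (Finset.sum_eq_zero fun p hp => ?_).symm
    exfalso
    simp only [Finset.mem_filter, Finset.HasAntidiagonal.mem_antidiagonal] at hp
    exact h (hp.1 ▸ dvd_add hp.2.1 hp.2.2)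

noncomputable def substHom (k : ℕ) (hk : k ≠ 0) : PowerSeries ℤ →+* PowerSeries ℤ where
  toFun := substQ k
  map_one' := substQ_one k hk
  map_mul' := substQ_mul k hk
  map_zero' := by ext n; rw [coeff_substQ]; simp
  map_add' := substQ_add k

lemma substQ_X_pow (k : ℕ) (hk : k ≠ 0) (e : ℕ) :
    substQ k ((X : PowerSeries ℤ) ^ e) = X ^ (k * e) := by
  have hkp : 0 < k := Nat.pos_of_ne_zero hk
  ext n
  rw [coeff_substQ, PowerSeries.coeff_X_pow, PowerSeries.coeff_X_pow]
  by_cases h : k ∣ n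
  · rcases h with ⟨c, rfl⟩
    rw [if_pos ⟨c, rfl⟩, Nat.mul_div_cancel_left c hkp]
    by_cases hc : c = e
    · rw [if_pos hc, if_pos (by rw [hc])]
    · rw [if_neg hc, if_neg (fun hh => hc (Nat.eq_of_mul_eq_mul_left hkp hh))]
  · rw [if_neg h, if_neg (fun hh => h ⟨e, hh⟩)]

lemma substQ_qp (k j l : ℕ) (hk : 1 ≤ k) (hj : 1 ≤ j) (hl : 1 ≤ l) :
    substQ k (qp j l) = qp (k * j) (k * l) := by
  have hk0 : k ≠ 0 := by omega
  ext n
  have hq : substQ k (∏ m ∈ range (n + 1), (1 - (X : PowerSeries ℤ) ^ (j + l * m))) =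
      ∏ m ∈ range (n + 1), (1 - (X : PowerSeries ℤ) ^ (k * j + k * l * m)) := by
    rw [show substQ k = ⇑(substHom k hk0) from rfl, map_prod]
    refine Finset.prod_congr rfl fun m _ => ?_
    rw [map_sub, map_one]
    rw [show (substHom k hk0) ((X : PowerSeries ℤ) ^ (j + l * m)) =
      substQ k ((X : PowerSeries ℤ) ^ (j + l * m)) from rfl, substQ_X_pow k hk0,
      show k * (j + l * m) = k * j + k * l * m by ring]
  have hrhs : coeff n (qp (k * j) (k * l)) =
      coeff n (substQ k (∏ m ∈ range (n + 1), (1 - (X : PowerSeries ℤ) ^ (j + l * m)))) := by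
    rw [hq, qp, coeff_mk]
  rw [hrhs, coeff_substQ, coeff_substQ]
  by_cases h : k ∣ n
  · rw [if_pos h, if_pos h]
    exact qp_spec j l (n / k) (n + 1) hj hl (by have := Nat.div_le_self n k; omega)
  · rw [if_neg h, if_neg h]

lemma substQ_inverse (k : ℕ) (hk : k ≠ 0) (f : PowerSeries ℤ) (hu : IsUnit f) :
    substQ k (Ring.inverse f) = Ring.inverse (substQ k f) := by
  have h1 : f * Ring.inverse f = 1 := Ring.mul_inverse_cancel f hu
  have h2 : substQ k f * substQ k (Ring.inverse f) = 1 := by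
    rw [← substQ_mul k hk, h1, substQ_one k hk]
  have hu2 : IsUnit (substQ k f) := IsUnit.of_mul_eq_one _ h2
  calc substQ k (Ring.inverse f)
      = (Ring.inverse (substQ k f) * substQ k f) * substQ k (Ring.inverse f) := by
        rw [Ring.inverse_mul_cancel _ hu2, one_mul]
    _ = Ring.inverse (substQ k f) * (substQ k f * substQ k (Ring.inverse f)) := by ring
    _ = Ring.inverse (substQ k f) := by rw [h2, mul_one]

lemma qp_constantCoeff (j k : ℕ) (hj : 1 ≤ j) : constantCoeff (qp j k) = 1 := by
  rw [← PowerSeries.coeff_zero_eq_constantCoeff, qp, coeff_mk, Finset.prod_range_one,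
    map_sub, PowerSeries.coeff_one, PowerSeries.coeff_X_pow, if_pos rfl,
    if_neg (show ¬ (0 = j + k * 0) by omega)]
  ring

lemma qp_isUnit (j k : ℕ) (hj : 1 ≤ j) : IsUnit (qp j k) :=
  PowerSeries.isUnit_iff_constantCoeff.mpr (by rw [qp_constantCoeff j k hj]; exact isUnit_one)

lemma substQ_pow (k : ℕ) (hk : k ≠ 0) (f : PowerSeries ℤ) (m : ℕ) :
    substQ k (f ^ m) = substQ k f ^ m := by
  induction m with
  | zero => simpa using substQ_one k hk
  | succ m ih => rw [pow_succ, substQ_mul k hk, ih, pow_succ]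


/-- `Φ(-q) = (q;q)_∞² / (q²;q²)_∞`. -/
noncomputable def Phi : PowerSeries ℤ := qp 1 1 ^ 2 * Ring.inverse (qp 2 2)

/-- `Ψ(q) = (q²;q²)_∞ / (q;q²)_∞`. -/
noncomputable def Psi : PowerSeries ℤ := qp 2 2 * Ring.inverse (qp 1 2)

/-- `P(q) = (q²;q⁶)_∞ (q⁴;q⁶)_∞ (q³;q³)_∞² / (q;q)_∞`. -/
noncomputable def Pq : PowerSeries ℤ := qp 2 6 * qp 4 6 * qp 3 3 ^ 2 * Ring.inverse (qp 1 1)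

/-- `X(-q) = (q;q)_∞ (q⁶;q⁶)_∞² / ((q²;q²)_∞ (q³;q³)_∞)`. -/
noncomputable def Xq : PowerSeries ℤ := qp 1 1 * qp 6 6 ^ 2 * Ring.inverse (qp 2 2 * qp 3 3)

/-- `Φ(-q³)` -/ noncomputable def Phi3 : PowerSeries ℤ := substQ 3 Phi
/-- `Φ(-q⁹)` -/ noncomputable def Phi9 : PowerSeries ℤ := substQ 9 Phi
/-- `Ψ(q³)` -/ noncomputable def Psi3 : PowerSeries ℤ := substQ 3 Psi
/-- `Ψ(q⁹)` -/ noncomputable def Psi9 : PowerSeries ℤ := substQ 9 Psi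
/-- `P(q³)` -/ noncomputable def P3 : PowerSeries ℤ := substQ 3 Pq
/-- `X(-q³)` -/ noncomputable def X3 : PowerSeries ℤ := substQ 3 Xq

lemma P3_eq : P3 = qp 6 18 * qp 12 18 * qp 9 9 ^ 2 * Ring.inverse (qp 3 3) := by
  have h3 : (3 : ℕ) ≠ 0 := by norm_num
  rw [P3, Pq, substQ_mul 3 h3, substQ_mul 3 h3, substQ_mul 3 h3, substQ_pow 3 h3,
    substQ_inverse 3 h3 _ (qp_isUnit 1 1 le_rfl),
    substQ_qp 3 2 6 (by norm_num) (by norm_num) (by norm_num),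
    substQ_qp 3 4 6 (by norm_num) (by norm_num) (by norm_num),
    substQ_qp 3 3 3 (by norm_num) (by norm_num) (by norm_num),
    substQ_qp 3 1 1 (by norm_num) (by norm_num) (by norm_num)]

lemma X3_eq : X3 = qp 3 3 * qp 18 18 ^ 2 * Ring.inverse (qp 6 6 * qp 9 9) := by
  have h3 : (3 : ℕ) ≠ 0 := by norm_num
  rw [X3, Xq, substQ_mul 3 h3, substQ_mul 3 h3, substQ_pow 3 h3,
    substQ_inverse 3 h3 _ ((qp_isUnit 2 2 (by norm_num)).mul (qp_isUnit 3 3 (by norm_num))),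
    substQ_mul 3 h3,
    substQ_qp 3 1 1 (by norm_num) (by norm_num) (by norm_num),
    substQ_qp 3 6 6 (by norm_num) (by norm_num) (by norm_num),
    substQ_qp 3 2 2 (by norm_num) (by norm_num) (by norm_num),
    substQ_qp 3 3 3 (by norm_num) (by norm_num) (by norm_num)]

lemma Phi9_eq : Phi9 = qp 9 9 ^ 2 * Ring.inverse (qp 18 18) := by
  have h9 : (9 : ℕ) ≠ 0 := by norm_num
  rw [Phi9, Phi, substQ_mul 9 h9, substQ_pow 9 h9,
    substQ_inverse 9 h9 _ (qp_isUnit 2 2 (by norm_num)),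
    substQ_qp 9 1 1 (by norm_num) (by norm_num) (by norm_num),
    substQ_qp 9 2 2 (by norm_num) (by norm_num) (by norm_num)]

lemma Psi9_eq : Psi9 = qp 18 18 * Ring.inverse (qp 9 18) := by
  have h9 : (9 : ℕ) ≠ 0 := by norm_num
  rw [Psi9, Psi, substQ_mul 9 h9,
    substQ_inverse 9 h9 _ (qp_isUnit 1 2 (by norm_num)),
    substQ_qp 9 2 2 (by norm_num) (by norm_num) (by norm_num),
    substQ_qp 9 1 2 (by norm_num) (by norm_num) (by norm_num)]

lemma l1 : qp 9 9 = qp 9 18 * qp 18 18 := by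
  have h := qp_split2 9 9 (by norm_num) (by norm_num)
  norm_num at h
  exact h

lemma l2 : qp 6 6 = qp 6 18 * qp 12 18 * qp 18 18 := by
  have h := qp_split3 6 6 (by norm_num) (by norm_num)
  norm_num at h
  exact h

theorem B_eval :
    512 * (PowerSeries.X : PowerSeries ℤ) ^ 5 * P3 ^ 8 * X3 ^ 5 * Phi9 ^ 3 - 1216 * (PowerSeries.X : PowerSeries ℤ) ^ 5 * P3 ^ 7 * X3 ^ 4 * Phi9 ^ 4 * Psi9 + 1280 * (PowerSeries.X : PowerSeries ℤ) ^ 5 * P3 ^ 6 * X3 ^ 3 * Phi9 ^ 5 * Psi9 ^ 2 - 640 * (PowerSeries.X : PowerSeries ℤ) ^ 5 * P3 ^ 5 * X3 ^ 2 * Phi9 ^ 6 * Psi9 ^ 3 + 152 * (PowerSeries.X : PowerSeries ℤ) ^ 5 * P3 ^ 4 * X3 * Phi9 ^ 7 * Psi9 ^ 4 - 16 * (PowerSeries.X : PowerSeries ℤ) ^ 5 * P3 ^ 3 * Phi9 ^ 8 * Psi9 ^ 5 = 8 * 3 ^ 2 * (PowerSeries.X : PowerSeries ℤ) ^ 5 *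 (qp 6 6 ^ 3 * qp 9 9 ^ 17 * Ring.inverse (qp 3 3 ^ 3 * qp 18 18)) := by
  have r1 : qp 3 3 * Ring.inverse (qp 3 3) = 1 :=
    Ring.mul_inverse_cancel _ (qp_isUnit 3 3 (by norm_num))
  have r2 : (qp 6 18 * qp 12 18 * qp 18 18 * (qp 9 18 * qp 18 18)) * Ring.inverse (qp 6 18 * qp 12 18 * qp 18 18 * (qp 9 18 * qp 18 18)) = 1 :=
    Ring.mul_inverse_cancel _ ((((qp_isUnit 6 18 (by norm_num)).mul
      (qp_isUnit 12 18 (by norm_num))).mul (qp_isUnit 18 18 (by norm_num))).mul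
      ((qp_isUnit 9 18 (by norm_num)).mul (qp_isUnit 18 18 (by norm_num))))
  have r3 : qp 18 18 * Ring.inverse (qp 18 18) = 1 :=
    Ring.mul_inverse_cancel _ (qp_isUnit 18 18 (by norm_num))
  have r4 : qp 9 18 * Ring.inverse (qp 9 18) = 1 :=
    Ring.mul_inverse_cancel _ (qp_isUnit 9 18 (by norm_num))
  have r5 : (qp 3 3 ^ 3 * qp 18 18) * Ring.inverse (qp 3 3 ^ 3 * qp 18 18) = 1 :=
    Ring.mul_inverse_cancel _ (((qp_isUnit 3 3 (by norm_num)).pow 3).mul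
      (qp_isUnit 18 18 (by norm_num)))
  have hu0 : (qp 3 3 ^ 8 * (qp 6 18 * qp 12 18 * qp 18 18 * (qp 9 18 * qp 18 18)) ^ 5 * qp 18 18 ^ 3 * qp 9 18 ^ 0) * (Ring.inverse (qp 3 3) ^ 8 * Ring.inverse (qp 6 18 * qp 12 18 * qp 18 18 * (qp 9 18 * qp 18 18)) ^ 5 * Ring.inverse (qp 18 18) ^ 3 * Ring.inverse (qp 9 18) ^ 0) = 1 := by
    calc (qp 3 3 ^ 8 * (qp 6 18 * qp 12 18 * qp 18 18 * (qp 9 18 * qp 18 18)) ^ 5 * qp 18 18 ^ 3 * qp 9 18 ^ 0) * (Ring.inverse (qp 3 3) ^ 8 * Ring.inverse (qp 6 18 * qp 12 18 * qp 18 18 * (qp 9 18 * qp 18 18)) ^ 5 * Ring.inverse (qp 18 18) ^ 3 * Ring.inverse (qp 9 18) ^ 0)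
        = (qp 3 3 * Ring.inverse (qp 3 3)) ^ 8 * ((qp 6 18 * qp 12 18 * qp 18 18 * (qp 9 18 * qp 18 18)) * Ring.inverse (qp 6 18 * qp 12 18 * qp 18 18 * (qp 9 18 * qp 18 18))) ^ 5 * (qp 18 18 * Ring.inverse (qp 18 18)) ^ 3 * (qp 9 18 * Ring.inverse (qp 9 18)) ^ 0 := by ring
      _ = 1 := by rw [r1, r2, r3, r4]; simp
  have t0 : (PowerSeries.X : PowerSeries ℤ) ^ 5 * (qp 6 18 * qp 12 18 * (qp 9 18 * qp 18 18) ^ 2 * Ring.inverse (qp 3 3)) ^ 8 * (qp 3 3 * qp 18 18 ^ 2 * Ring.inverse (qp 6 18 * qp 12 18 * qp 18 18 * (qp 9 18 * qp 18 18))) ^ 5 * ((qp 9 18 * qp 18 18) ^ 2 * Ring.inverse (qp 18 18)) ^ 3 * (qp 18 18 * Ring.inverse (qp 9 18)) ^ 0 = (PowerSeries.X : PowerSeries ℤ) ^ 5 * ((qp 6 18 * qp 12 18 * qp 18 18) ^ 3 * (qp 9 18 * qp 18 18) ^ 17 * Ring.inverse (qp 3 3 ^ 3 * qp 18 18)) :=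 by
    linear_combination ((PowerSeries.X : PowerSeries ℤ) ^ 5 * ((qp 6 18 * qp 12 18 * qp 18 18) ^ 3 * (qp 9 18 * qp 18 18) ^ 17 * Ring.inverse (qp 3 3 ^ 3 * qp 18 18))) * hu0 - ((PowerSeries.X : PowerSeries ℤ) ^ 5 * (qp 6 18 * qp 12 18 * (qp 9 18 * qp 18 18) ^ 2 * Ring.inverse (qp 3 3)) ^ 8 * (qp 3 3 * qp 18 18 ^ 2 * Ring.inverse (qp 6 18 * qp 12 18 * qp 18 18 * (qp 9 18 * qp 18 18))) ^ 5 * ((qp 9 18 * qp 18 18) ^ 2 * Ring.inverse (qp 18 18)) ^ 3 * (qp 18 18 * Ring.inverse (qp 9 18)) ^ 0) * r5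
  have hu1 : (qp 3 3 ^ 7 * (qp 6 18 * qp 12 18 * qp 18 18 * (qp 9 18 * qp 18 18)) ^ 4 * qp 18 18 ^ 4 * qp 9 18 ^ 1) * (Ring.inverse (qp 3 3) ^ 7 * Ring.inverse (qp 6 18 * qp 12 18 * qp 18 18 * (qp 9 18 * qp 18 18)) ^ 4 * Ring.inverse (qp 18 18) ^ 4 * Ring.inverse (qp 9 18) ^ 1) = 1 := by
    calc (qp 3 3 ^ 7 * (qp 6 18 * qp 12 18 * qp 18 18 * (qp 9 18 * qp 18 18)) ^ 4 * qp 18 18 ^ 4 * qp 9 18 ^ 1) * (Ring.inverse (qp 3 3) ^ 7 * Ring.inverse (qp 6 18 * qp 12 18 * qp 18 18 * (qp 9 18 * qp 18 18)) ^ 4 * Ring.inverse (qp 18 18) ^ 4 * Ring.inverse (qp 9 18) ^ 1)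
        = (qp 3 3 * Ring.inverse (qp 3 3)) ^ 7 * ((qp 6 18 * qp 12 18 * qp 18 18 * (qp 9 18 * qp 18 18)) * Ring.inverse (qp 6 18 * qp 12 18 * qp 18 18 * (qp 9 18 * qp 18 18))) ^ 4 * (qp 18 18 * Ring.inverse (qp 18 18)) ^ 4 * (qp 9 18 * Ring.inverse (qp 9 18)) ^ 1 := by ring
      _ = 1 := by rw [r1, r2, r3, r4]; simp
  have t1 : (PowerSeries.X : PowerSeries ℤ) ^ 5 * (qp 6 18 * qp 12 18 * (qp 9 18 * qp 18 18) ^ 2 * Ring.inverse (qp 3 3)) ^ 7 * (qp 3 3 * qp 18 18 ^ 2 * Ring.inverse (qp 6 18 * qp 12 18 * qp 18 18 * (qp 9 18 * qp 18 18))) ^ 4 * ((qp 9 18 * qp 18 18) ^ 2 * Ring.inverse (qp 18 18)) ^ 4 * (qp 18 18 * Ring.inverse (qp 9 18)) ^ 1 = (PowerSeries.X : PowerSeries ℤ) ^ 5 * ((qp 6 18 * qp 12 18 * qp 18 18) ^ 3 * (qp 9 18 * qp 18 18) ^ 17 * Ring.inverse (qp 3 3 ^ 3 * qp 18 18)) :=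 by
    linear_combination ((PowerSeries.X : PowerSeries ℤ) ^ 5 * ((qp 6 18 * qp 12 18 * qp 18 18) ^ 3 * (qp 9 18 * qp 18 18) ^ 17 * Ring.inverse (qp 3 3 ^ 3 * qp 18 18))) * hu1 - ((PowerSeries.X : PowerSeries ℤ) ^ 5 * (qp 6 18 * qp 12 18 * (qp 9 18 * qp 18 18) ^ 2 * Ring.inverse (qp 3 3)) ^ 7 * (qp 3 3 * qp 18 18 ^ 2 * Ring.inverse (qp 6 18 * qp 12 18 * qp 18 18 * (qp 9 18 * qp 18 18))) ^ 4 * ((qp 9 18 * qp 18 18) ^ 2 * Ring.inverse (qp 18 18)) ^ 4 * (qp 18 18 * Ring.inverse (qp 9 18)) ^ 1) * r5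
  have hu2 : (qp 3 3 ^ 6 * (qp 6 18 * qp 12 18 * qp 18 18 * (qp 9 18 * qp 18 18)) ^ 3 * qp 18 18 ^ 5 * qp 9 18 ^ 2) * (Ring.inverse (qp 3 3) ^ 6 * Ring.inverse (qp 6 18 * qp 12 18 * qp 18 18 * (qp 9 18 * qp 18 18)) ^ 3 * Ring.inverse (qp 18 18) ^ 5 * Ring.inverse (qp 9 18) ^ 2) = 1 := by
    calc (qp 3 3 ^ 6 * (qp 6 18 * qp 12 18 * qp 18 18 * (qp 9 18 * qp 18 18)) ^ 3 * qp 18 18 ^ 5 * qp 9 18 ^ 2) * (Ring.inverse (qp 3 3) ^ 6 * Ring.inverse (qp 6 18 * qp 12 18 * qp 18 18 * (qp 9 18 * qp 18 18)) ^ 3 * Ring.inverse (qp 18 18) ^ 5 * Ring.inverse (qp 9 18) ^ 2)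
        = (qp 3 3 * Ring.inverse (qp 3 3)) ^ 6 * ((qp 6 18 * qp 12 18 * qp 18 18 * (qp 9 18 * qp 18 18)) * Ring.inverse (qp 6 18 * qp 12 18 * qp 18 18 * (qp 9 18 * qp 18 18))) ^ 3 * (qp 18 18 * Ring.inverse (qp 18 18)) ^ 5 * (qp 9 18 * Ring.inverse (qp 9 18)) ^ 2 := by ring
      _ = 1 := by rw [r1, r2, r3, r4]; simp
  have t2 : (PowerSeries.X : PowerSeries ℤ) ^ 5 * (qp 6 18 * qp 12 18 * (qp 9 18 * qp 18 18) ^ 2 * Ring.inverse (qp 3 3)) ^ 6 * (qp 3 3 * qp 18 18 ^ 2 * Ring.inverse (qp 6 18 * qp 12 18 * qp 18 18 * (qp 9 18 * qp 18 18))) ^ 3 * ((qp 9 18 * qp 18 18) ^ 2 * Ring.inverse (qp 18 18)) ^ 5 * (qp 18 18 * Ring.inverse (qp 9 18)) ^ 2 = (PowerSeries.X : PowerSeries ℤ) ^ 5 * ((qp 6 18 * qp 12 18 * qp 18 18) ^ 3 * (qp 9 18 * qp 18 18) ^ 17 * Ring.inverse (qp 3 3 ^ 3 * qp 18 18)) :=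 by
    linear_combination ((PowerSeries.X : PowerSeries ℤ) ^ 5 * ((qp 6 18 * qp 12 18 * qp 18 18) ^ 3 * (qp 9 18 * qp 18 18) ^ 17 * Ring.inverse (qp 3 3 ^ 3 * qp 18 18))) * hu2 - ((PowerSeries.X : PowerSeries ℤ) ^ 5 * (qp 6 18 * qp 12 18 * (qp 9 18 * qp 18 18) ^ 2 * Ring.inverse (qp 3 3)) ^ 6 * (qp 3 3 * qp 18 18 ^ 2 * Ring.inverse (qp 6 18 * qp 12 18 * qp 18 18 * (qp 9 18 * qp 18 18))) ^ 3 * ((qp 9 18 * qp 18 18) ^ 2 * Ring.inverse (qp 18 18)) ^ 5 * (qp 18 18 * Ring.inverse (qp 9 18)) ^ 2) * r5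
  have hu3 : (qp 3 3 ^ 5 * (qp 6 18 * qp 12 18 * qp 18 18 * (qp 9 18 * qp 18 18)) ^ 2 * qp 18 18 ^ 6 * qp 9 18 ^ 3) * (Ring.inverse (qp 3 3) ^ 5 * Ring.inverse (qp 6 18 * qp 12 18 * qp 18 18 * (qp 9 18 * qp 18 18)) ^ 2 * Ring.inverse (qp 18 18) ^ 6 * Ring.inverse (qp 9 18) ^ 3) = 1 := by
    calc (qp 3 3 ^ 5 * (qp 6 18 * qp 12 18 * qp 18 18 * (qp 9 18 * qp 18 18)) ^ 2 * qp 18 18 ^ 6 * qp 9 18 ^ 3) * (Ring.inverse (qp 3 3) ^ 5 * Ring.inverse (qp 6 18 * qp 12 18 * qp 18 18 * (qp 9 18 * qp 18 18)) ^ 2 * Ring.inverse (qp 18 18) ^ 6 * Ring.inverse (qp 9 18) ^ 3)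
        = (qp 3 3 * Ring.inverse (qp 3 3)) ^ 5 * ((qp 6 18 * qp 12 18 * qp 18 18 * (qp 9 18 * qp 18 18)) * Ring.inverse (qp 6 18 * qp 12 18 * qp 18 18 * (qp 9 18 * qp 18 18))) ^ 2 * (qp 18 18 * Ring.inverse (qp 18 18)) ^ 6 * (qp 9 18 * Ring.inverse (qp 9 18)) ^ 3 := by ring
      _ = 1 := by rw [r1, r2, r3, r4]; simp
  have t3 : (PowerSeries.X : PowerSeries ℤ) ^ 5 * (qp 6 18 * qp 12 18 * (qp 9 18 * qp 18 18) ^ 2 * Ring.inverse (qp 3 3)) ^ 5 * (qp 3 3 * qp 18 18 ^ 2 * Ring.inverse (qp 6 18 * qp 12 18 * qp 18 18 * (qp 9 18 * qp 18 18))) ^ 2 * ((qp 9 18 * qp 18 18) ^ 2 * Ring.inverse (qp 18 18)) ^ 6 * (qp 18 18 * Ring.inverse (qp 9 18)) ^ 3 = (PowerSeries.X : PowerSeries ℤ) ^ 5 * ((qp 6 18 * qp 12 18 * qp 18 18) ^ 3 * (qp 9 18 * qp 18 18) ^ 17 * Ring.inverse (qp 3 3 ^ 3 * qp 18 18)) :=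 by
    linear_combination ((PowerSeries.X : PowerSeries ℤ) ^ 5 * ((qp 6 18 * qp 12 18 * qp 18 18) ^ 3 * (qp 9 18 * qp 18 18) ^ 17 * Ring.inverse (qp 3 3 ^ 3 * qp 18 18))) * hu3 - ((PowerSeries.X : PowerSeries ℤ) ^ 5 * (qp 6 18 * qp 12 18 * (qp 9 18 * qp 18 18) ^ 2 * Ring.inverse (qp 3 3)) ^ 5 * (qp 3 3 * qp 18 18 ^ 2 * Ring.inverse (qp 6 18 * qp 12 18 * qp 18 18 * (qp 9 18 * qp 18 18))) ^ 2 * ((qp 9 18 * qp 18 18) ^ 2 * Ring.inverse (qp 18 18)) ^ 6 * (qp 18 18 * Ring.inverse (qp 9 18)) ^ 3) * r5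
  have hu4 : (qp 3 3 ^ 4 * (qp 6 18 * qp 12 18 * qp 18 18 * (qp 9 18 * qp 18 18)) ^ 1 * qp 18 18 ^ 7 * qp 9 18 ^ 4) * (Ring.inverse (qp 3 3) ^ 4 * Ring.inverse (qp 6 18 * qp 12 18 * qp 18 18 * (qp 9 18 * qp 18 18)) ^ 1 * Ring.inverse (qp 18 18) ^ 7 * Ring.inverse (qp 9 18) ^ 4) = 1 := by
    calc (qp 3 3 ^ 4 * (qp 6 18 * qp 12 18 * qp 18 18 * (qp 9 18 * qp 18 18)) ^ 1 * qp 18 18 ^ 7 * qp 9 18 ^ 4) * (Ring.inverse (qp 3 3) ^ 4 * Ring.inverse (qp 6 18 * qp 12 18 * qp 18 18 * (qp 9 18 * qp 18 18)) ^ 1 * Ring.inverse (qp 18 18) ^ 7 * Ring.inverse (qp 9 18) ^ 4)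
        = (qp 3 3 * Ring.inverse (qp 3 3)) ^ 4 * ((qp 6 18 * qp 12 18 * qp 18 18 * (qp 9 18 * qp 18 18)) * Ring.inverse (qp 6 18 * qp 12 18 * qp 18 18 * (qp 9 18 * qp 18 18))) ^ 1 * (qp 18 18 * Ring.inverse (qp 18 18)) ^ 7 * (qp 9 18 * Ring.inverse (qp 9 18)) ^ 4 := by ring
      _ = 1 := by rw [r1, r2, r3, r4]; simp
  have t4 : (PowerSeries.X : PowerSeries ℤ) ^ 5 * (qp 6 18 * qp 12 18 * (qp 9 18 * qp 18 18) ^ 2 * Ring.inverse (qp 3 3)) ^ 4 * (qp 3 3 * qp 18 18 ^ 2 * Ring.inverse (qp 6 18 * qp 12 18 * qp 18 18 * (qp 9 18 * qp 18 18))) ^ 1 * ((qp 9 18 * qp 18 18) ^ 2 * Ring.inverse (qp 18 18)) ^ 7 * (qp 18 18 * Ring.inverse (qp 9 18)) ^ 4 = (PowerSeries.X : PowerSeries ℤ) ^ 5 * ((qp 6 18 * qp 12 18 * qp 18 18) ^ 3 * (qp 9 18 * qp 18 18) ^ 17 * Ring.inverse (qp 3 3 ^ 3 * qp 18 18)) :=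 by
    linear_combination ((PowerSeries.X : PowerSeries ℤ) ^ 5 * ((qp 6 18 * qp 12 18 * qp 18 18) ^ 3 * (qp 9 18 * qp 18 18) ^ 17 * Ring.inverse (qp 3 3 ^ 3 * qp 18 18))) * hu4 - ((PowerSeries.X : PowerSeries ℤ) ^ 5 * (qp 6 18 * qp 12 18 * (qp 9 18 * qp 18 18) ^ 2 * Ring.inverse (qp 3 3)) ^ 4 * (qp 3 3 * qp 18 18 ^ 2 * Ring.inverse (qp 6 18 * qp 12 18 * qp 18 18 * (qp 9 18 * qp 18 18))) ^ 1 * ((qp 9 18 * qp 18 18) ^ 2 * Ring.inverse (qp 18 18)) ^ 7 * (qp 18 18 * Ring.inverse (qp 9 18)) ^ 4) * r5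
  have hu5 : (qp 3 3 ^ 3 * (qp 6 18 * qp 12 18 * qp 18 18 * (qp 9 18 * qp 18 18)) ^ 0 * qp 18 18 ^ 8 * qp 9 18 ^ 5) * (Ring.inverse (qp 3 3) ^ 3 * Ring.inverse (qp 6 18 * qp 12 18 * qp 18 18 * (qp 9 18 * qp 18 18)) ^ 0 * Ring.inverse (qp 18 18) ^ 8 * Ring.inverse (qp 9 18) ^ 5) = 1 := by
    calc (qp 3 3 ^ 3 * (qp 6 18 * qp 12 18 * qp 18 18 * (qp 9 18 * qp 18 18)) ^ 0 * qp 18 18 ^ 8 * qp 9 18 ^ 5) * (Ring.inverse (qp 3 3) ^ 3 * Ring.inverse (qp 6 18 * qp 12 18 * qp 18 18 * (qp 9 18 * qp 18 18)) ^ 0 * Ring.inverse (qp 18 18) ^ 8 * Ring.inverse (qp 9 18) ^ 5)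
        = (qp 3 3 * Ring.inverse (qp 3 3)) ^ 3 * ((qp 6 18 * qp 12 18 * qp 18 18 * (qp 9 18 * qp 18 18)) * Ring.inverse (qp 6 18 * qp 12 18 * qp 18 18 * (qp 9 18 * qp 18 18))) ^ 0 * (qp 18 18 * Ring.inverse (qp 18 18)) ^ 8 * (qp 9 18 * Ring.inverse (qp 9 18)) ^ 5 := by ring
      _ = 1 := by rw [r1, r2, r3, r4]; simp
  have t5 : (PowerSeries.X : PowerSeries ℤ) ^ 5 * (qp 6 18 * qp 12 18 * (qp 9 18 * qp 18 18) ^ 2 * Ring.inverse (qp 3 3)) ^ 3 * (qp 3 3 * qp 18 18 ^ 2 * Ring.inverse (qp 6 18 * qp 12 18 * qp 18 18 * (qp 9 18 * qp 18 18))) ^ 0 * ((qp 9 18 * qp 18 18) ^ 2 * Ring.inverse (qp 18 18)) ^ 8 * (qp 18 18 * Ring.inverse (qp 9 18)) ^ 5 = (PowerSeries.X : PowerSeries ℤ) ^ 5 * ((qp 6 18 * qp 12 18 * qp 18 18) ^ 3 * (qp 9 18 * qp 18 18) ^ 17 * Ring.inverse (qp 3 3 ^ 3 * qp 18 18)) :=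 by
    linear_combination ((PowerSeries.X : PowerSeries ℤ) ^ 5 * ((qp 6 18 * qp 12 18 * qp 18 18) ^ 3 * (qp 9 18 * qp 18 18) ^ 17 * Ring.inverse (qp 3 3 ^ 3 * qp 18 18))) * hu5 - ((PowerSeries.X : PowerSeries ℤ) ^ 5 * (qp 6 18 * qp 12 18 * (qp 9 18 * qp 18 18) ^ 2 * Ring.inverse (qp 3 3)) ^ 3 * (qp 3 3 * qp 18 18 ^ 2 * Ring.inverse (qp 6 18 * qp 12 18 * qp 18 18 * (qp 9 18 * qp 18 18))) ^ 0 * ((qp 9 18 * qp 18 18) ^ 2 * Ring.inverse (qp 18 18)) ^ 8 * (qp 18 18 * Ring.inverse (qp 9 18)) ^ 5) * r5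
  rw [P3_eq, X3_eq, Phi9_eq, Psi9_eq, l1, l2]
  linear_combination 512 * t0 - 1216 * t1 + 1280 * t2 - 640 * t3 + 152 * t4 - 16 * t5
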